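/- (Decoupling of distant centers) Let N ≥ 1, α > N, a > 0, and for β > 0 define Γ_β(i) = a|i|^{−α}e^{−β|i|} for i ≠ 0, Γ_β(0) = a (ℓ¹-norm on ℤ^N). Fix c_{1,1},…,c_{1,r} ∈ ℤ^N and c_2 ∈ ℤ^N, and for m ∈ ℤ^N set I₁(m) = {i ∈ ℤ^N : min_{k} |i − c_{1,k}| < |i + m − c_2|} and I₂(m) = ℤ^N ∖ I₁(m). Then for all 0 < β̃ < β: (i) for every ε > 0 there exists M such that for all m with |m| ≥ M and all i ∈ I₁(m), Γ_β(i + m − c_2) ≤ ε·max_{k} Γ_{β̃}(i − c_{1,k}); and (ii) for every ε > 0 there exists M such that for all m with |m| ≥ M and all i ∈ I₂(m), max_{k} Γ_β(i − c_{1,k}) ≤ ε·Γ_{β̃}(i + m − c_2). -/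

import Mathlib

open scoped BigOperators

noncomputable section

/-- The ℓ¹-norm of a lattice point `i ∈ ℤ^N`, as a natural number. -/
def l1Z {N : ℕ} (i : Fin N → ℤ) : ℕ := ∑ s, (i s).natAbs

/-- The decay function `Γ_β(i) = a |i|^{-α} e^{-β|i|}` for `i ≠ 0`, `Γ_β(0) = a`. -/
noncomputable def GammaBeta (N : ℕ) (a α β : ℝ) (i : Fin N → ℤ) : ℝ :=
  if i = 0 then a else a * ((l1Z i : ℝ)) ^ (-α) * Real.exp (-β * (l1Z i : ℝ))

/-- The radial profile of `GammaBeta`. -/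
noncomputable def Gfun (a α β : ℝ) (n : ℕ) : ℝ :=
  if n = 0 then a else a * ((n : ℝ)) ^ (-α) * Real.exp (-β * (n : ℝ))

lemma l1Z_eq_zero_iff {N : ℕ} (i : Fin N → ℤ) : l1Z i = 0 ↔ i = 0 := by
  simp [l1Z, Finset.sum_eq_zero_iff, funext_iff]

lemma GammaBeta_eq_Gfun {N : ℕ} (a α β : ℝ) (i : Fin N → ℤ) :
    GammaBeta N a α β i = Gfun a α β (l1Z i) := by
  unfold GammaBeta Gfun
  by_cases h : i = 0
  · rw [if_pos h, if_pos ((l1Z_eq_zero_iff i).mpr h)]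
  · rw [if_neg h, if_neg (fun hz => h ((l1Z_eq_zero_iff i).mp hz))]

lemma l1Z_neg {N : ℕ} (i : Fin N → ℤ) : l1Z (-i) = l1Z i := by
  simp [l1Z]

lemma l1Z_add_le {N : ℕ} (x y : Fin N → ℤ) : l1Z (x + y) ≤ l1Z x + l1Z y := by
  unfold l1Z
  rw [← Finset.sum_add_distrib]
  exact Finset.sum_le_sum fun s _ => Int.natAbs_add_le _ _

lemma Gfun_pos {a α β : ℝ} (ha : 0 < a) (n : ℕ) : 0 < Gfun a α β n := by
  unfold Gfun
  rcases Nat.eq_zero_or_pos n with h | h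
  · simp [h, ha]
  · rw [if_neg h.ne']
    have : (0:ℝ) < n := by exact_mod_cast h
    positivity

lemma Gfun_key {a α β βt : ℝ} (ha : 0 < a) (hα : 0 < α) (hβt : 0 < βt)
    (ns nb : ℕ) (h : ns ≤ nb) :
    Gfun a α β nb ≤ Real.exp (-(β - βt) * nb) * Gfun a α βt ns := by
  unfold Gfun
  rcases Nat.eq_zero_or_pos nb with hb | hb
  · have hs : ns = 0 := Nat.le_zero.mp (hb ▸ h)
    simp [hb, hs]
  have hb1 : (1:ℝ) ≤ nb := by exact_mod_cast hb
  have hbe : Real.exp (-β * nb) ≤ Real.exp (-(β - βt) * nb) := by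
    apply Real.exp_le_exp.mpr
    nlinarith
  rw [if_neg hb.ne']
  rcases Nat.eq_zero_or_pos ns with hs | hs
  · rw [if_pos hs]
    have hpow : ((nb:ℝ)) ^ (-α) ≤ 1 :=
      Real.rpow_le_one_of_one_le_of_nonpos hb1 (by linarith)
    calc a * (nb:ℝ) ^ (-α) * Real.exp (-β * nb)
        ≤ a * 1 * Real.exp (-(β - βt) * nb) := by
          apply mul_le_mul (mul_le_mul_of_nonneg_left hpow ha.le) hbe (Real.exp_pos _).le
          positivity
      _ = Real.exp (-(β - βt) * nb) * a := by ring
  · rw [if_neg hs.ne']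
    have hs1 : (1:ℝ) ≤ ns := by exact_mod_cast hs
    have hsb : (ns:ℝ) ≤ nb := by exact_mod_cast h
    have hpow : ((nb:ℝ)) ^ (-α) ≤ ((ns:ℝ)) ^ (-α) :=
      Real.rpow_le_rpow_of_nonpos (by linarith) hsb (by linarith)
    have hexp : Real.exp (-β * nb) ≤ Real.exp (-(β - βt) * nb) * Real.exp (-βt * ns) := by
      rw [← Real.exp_add]
      apply Real.exp_le_exp.mpr
      nlinarith
    calc a * (nb:ℝ) ^ (-α) * Real.exp (-β * nb)
        ≤ a * (ns:ℝ) ^ (-α) * (Real.exp (-(β - βt) * nb) * Real.exp (-βt * ns)) := by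
          apply mul_le_mul (mul_le_mul_of_nonneg_left hpow ha.le) hexp (Real.exp_pos _).le
          positivity
      _ = Real.exp (-(β - βt) * nb) * (a * (ns:ℝ) ^ (-α) * Real.exp (-βt * ns)) := by ring

/-- Decoupling of distant centers: with
`I₁(m) = {i : min_k |i−c_{1,k}| < |i+m−c_2|}` and `I₂(m)` its complement, for any
`0 < β̃ < β`, (i) on `I₁(m)` the weight `Γ_β(i+m−c_2)` is eventually (as `|m| → ∞`)
dominated by `ε·max_k Γ_{β̃}(i−c_{1,k})`, and (ii) on `I₂(m)` the weight
`max_k Γ_β(i−c_{1,k})` is eventually dominated by `ε·Γ_{β̃}(i+m−c_2)`. -/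
theorem statement15 {N : ℕ} (hN : 1 ≤ N) (a α : ℝ) (hα : (N : ℝ) < α) (ha : 0 < a)
    (r : ℕ) [NeZero r] (c1 : Fin r → (Fin N → ℤ)) (c2 : Fin N → ℤ)
    (β βt : ℝ) (hβt : 0 < βt) (hββ : βt < β) :
    (∀ ε : ℝ, 0 < ε → ∃ M : ℕ, ∀ m : Fin N → ℤ, M ≤ l1Z m →
      ∀ i : Fin N → ℤ,
        (Finset.univ.inf' ⟨⟨0, Nat.pos_of_ne_zero (NeZero.ne r)⟩, Finset.mem_univ _⟩
            (fun k : Fin r => l1Z (i - c1 k)) < l1Z (i + m - c2)) →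
        GammaBeta N a α β (i + m - c2) ≤
          ε * Finset.univ.sup' ⟨⟨0, Nat.pos_of_ne_zero (NeZero.ne r)⟩, Finset.mem_univ _⟩
            (fun k : Fin r => GammaBeta N a α βt (i - c1 k))) ∧
    (∀ ε : ℝ, 0 < ε → ∃ M : ℕ, ∀ m : Fin N → ℤ, M ≤ l1Z m →
      ∀ i : Fin N → ℤ,
        ¬ (Finset.univ.inf' ⟨⟨0, Nat.pos_of_ne_zero (NeZero.ne r)⟩, Finset.mem_univ _⟩
            (fun k : Fin r => l1Z (i - c1 k)) < l1Z (i + m - c2)) →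
        Finset.univ.sup' ⟨⟨0, Nat.pos_of_ne_zero (NeZero.ne r)⟩, Finset.mem_univ _⟩
            (fun k : Fin r => GammaBeta N a α β (i - c1 k)) ≤
          ε * GammaBeta N a α βt (i + m - c2)) := by
  have hα0 : 0 < α := lt_of_le_of_lt (by positivity) hα
  set C : ℕ := Finset.univ.sup (fun k : Fin r => l1Z (c2 - c1 k)) with hC
  have hCk : ∀ k : Fin r, l1Z (c2 - c1 k) ≤ C := fun k => Finset.le_sup (f := fun k : Fin r => l1Z (c2 - c1 k)) (Finset.mem_univ k)
  -- triangle inequality giving largeness of the far index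
  have htri : ∀ (m i : Fin N → ℤ) (k : Fin r),
      l1Z m ≤ l1Z (i + m - c2) + l1Z (i - c1 k) + C := by
    intro m i k
    have h1 : m = (i + m - c2) + (-(i - c1 k)) + (c2 - c1 k) := by ring
    calc l1Z m = l1Z ((i + m - c2) + (-(i - c1 k)) + (c2 - c1 k)) := by rw [← h1]
      _ ≤ l1Z ((i + m - c2) + (-(i - c1 k))) + l1Z (c2 - c1 k) := l1Z_add_le _ _
      _ ≤ (l1Z (i + m - c2) + l1Z (-(i - c1 k))) + l1Z (c2 - c1 k) :=
          add_le_add_left (l1Z_add_le _ _) _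
      _ ≤ l1Z (i + m - c2) + l1Z (i - c1 k) + C := by
          rw [l1Z_neg]; exact add_le_add_right (hCk k) _
  have hβd : 0 < β - βt := by linarith
  -- for any ε, a threshold T with exp(-(β-βt) n) ≤ ε for all n ≥ T
  have hthr : ∀ ε : ℝ, 0 < ε → ∃ T : ℕ, ∀ n : ℕ, T ≤ n →
      Real.exp (-(β - βt) * n) ≤ ε := by
    intro ε hε
    obtain ⟨T, hT⟩ := exists_pow_lt_of_lt_one hε
      (Real.exp_lt_one_iff.mpr (by linarith : -(β - βt) < 0))
    refine ⟨T, fun n hn => ?_⟩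
    have h1 : Real.exp (-(β - βt) * n) ≤ Real.exp (-(β - βt) * T) := by
      apply Real.exp_le_exp.mpr
      have hTn : (T:ℝ) ≤ n := by exact_mod_cast hn
      nlinarith
    have h2 : Real.exp (-(β - βt) * T) = Real.exp (-(β - βt)) ^ T := by
      rw [← Real.exp_nat_mul]; ring_nf
    linarith [h2 ▸ h1]
  constructor
  · intro ε hε
    obtain ⟨T, hT⟩ := hthr ε hε
    refine ⟨C + 2 * T, fun m hm i hi => ?_⟩
    obtain ⟨k₀, -, hk₀⟩ := Finset.exists_mem_eq_inf'
      (⟨⟨0, Nat.pos_of_ne_zero (NeZero.ne r)⟩, Finset.mem_univ _⟩ :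
        (Finset.univ : Finset (Fin r)).Nonempty)
      (fun k : Fin r => l1Z (i - c1 k))
    have hi' : l1Z (i - c1 k₀) < l1Z (i + m - c2) := by rw [← hk₀]; exact hi
    have hns : l1Z (i - c1 k₀) ≤ l1Z (i + m - c2) := hi'.le
    have hTnb : T ≤ l1Z (i + m - c2) := by
      have := htri m i k₀; omega
    calc GammaBeta N a α β (i + m - c2) = Gfun a α β (l1Z (i + m - c2)) :=
          GammaBeta_eq_Gfun _ _ _ _
      _ ≤ Real.exp (-(β - βt) * (l1Z (i + m - c2))) * Gfun a α βt (l1Z (i - c1 k₀)) :=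
          Gfun_key ha hα0 hβt _ _ hns
      _ ≤ ε * Gfun a α βt (l1Z (i - c1 k₀)) :=
          mul_le_mul_of_nonneg_right (hT _ hTnb) (Gfun_pos ha _).le
      _ = ε * GammaBeta N a α βt (i - c1 k₀) := by rw [GammaBeta_eq_Gfun]
      _ ≤ ε * Finset.univ.sup' ⟨⟨0, Nat.pos_of_ne_zero (NeZero.ne r)⟩, Finset.mem_univ _⟩
            (fun k : Fin r => GammaBeta N a α βt (i - c1 k)) :=
          mul_le_mul_of_nonneg_left
            (Finset.le_sup' (fun k : Fin r => GammaBeta N a α βt (i - c1 k))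
              (Finset.mem_univ k₀)) hε.le
  · intro ε hε
    obtain ⟨T, hT⟩ := hthr ε hε
    refine ⟨C + 2 * T, fun m hm i hi => ?_⟩
    push_neg at hi
    apply Finset.sup'_le
    intro k _
    have hns : l1Z (i + m - c2) ≤ l1Z (i - c1 k) :=
      le_trans hi (Finset.inf'_le (fun k : Fin r => l1Z (i - c1 k)) (Finset.mem_univ k))
    have hTnb : T ≤ l1Z (i - c1 k) := by
      have := htri m i k; omega
    calc GammaBeta N a α β (i - c1 k) = Gfun a α β (l1Z (i - c1 k)) :=
          GammaBeta_eq_Gfun _ _ _ _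
      _ ≤ Real.exp (-(β - βt) * (l1Z (i - c1 k))) * Gfun a α βt (l1Z (i + m - c2)) :=
          Gfun_key ha hα0 hβt _ _ hns
      _ ≤ ε * Gfun a α βt (l1Z (i + m - c2)) :=
          mul_le_mul_of_nonneg_right (hT _ hTnb) (Gfun_pos ha _).le
      _ = ε * GammaBeta N a α βt (i + m - c2) := by rw [GammaBeta_eq_Gfun]
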